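/- Monotonicity of the robust value in the ambiguity radius and center inclusion: let X be a finite set, d a metric on X, v : X → ℝ, and P̄, P̂ probability vectors on X. If the Wasserstein ball of radius δ around P̄ is contained in the Wasserstein ball of radius δ' around P̂, then sup_{Q : W(Q,P̄) ≤ δ} Σ_{y∈X} v(y) Q(y) ≤ inf over λ ≥ 0 of [ λ δ' + Σ_{y∈X} ( max_{l∈X} ( −λ d(l,y) + v(l) ) ) P̂(y) ]. -/
import Mathlib


open Finset

/-- A probability vector on a finite set `X`. -/
def IsProbVec {X : Type*} [Fintype X] (μ : X → ℝ) : Prop :=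
  (∀ x, 0 ≤ μ x) ∧ ∑ x, μ x = 1

/-- A coupling of two probability vectors on a finite set `X`. -/
def IsCoupling {X : Type*} [Fintype X] (μ ν : X → ℝ) (Γ : X × X → ℝ) : Prop :=
  (∀ p, 0 ≤ Γ p) ∧ (∀ y, ∑ z, Γ (y, z) = μ y) ∧ (∀ z, ∑ y, Γ (y, z) = ν z)

/-- `d` is a metric on `X`. -/
def IsMetricOn {X : Type*} (d : X → X → ℝ) : Prop :=
  (∀ x y, 0 ≤ d x y) ∧ (∀ x y, d x y = 0 ↔ x = y) ∧ (∀ x y, d x y = d y x) ∧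
    (∀ x y z, d x z ≤ d x y + d y z)

/-- The 1-Wasserstein distance between probability vectors on a finite set. -/
noncomputable def Wass {X : Type*} [Fintype X] (d : X → X → ℝ) (μ ν : X → ℝ) : ℝ :=
  sInf {c | ∃ Γ : X × X → ℝ, IsCoupling μ ν Γ ∧ c = ∑ p : X × X, Γ p * d p.1 p.2}

/-- product coupling exists -/
lemma prod_coupling {X : Type*} [Fintype X] (μ ν : X → ℝ) (hμ : IsProbVec μ)
    (hν : IsProbVec ν) : IsCoupling μ ν (fun p => μ p.1 * ν p.2) := by
  refine ⟨fun p => mul_nonneg (hμ.1 _) (hν.1 _), fun y => ?_, fun z => ?_⟩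
  · simp [← Finset.mul_sum, hν.2]
  · simp [← Finset.sum_mul, hμ.2]

lemma coupling_key {X : Type*} [Fintype X] [Nonempty X]
    (d : X → X → ℝ) (hd : IsMetricOn d) (v Q Phat : X → ℝ)
    (Γ : X × X → ℝ) (hΓ : IsCoupling Q Phat Γ) (lam : ℝ) (hlam : 0 ≤ lam) :
    ∑ y, v y * Q y ≤ lam * (∑ p : X × X, Γ p * d p.1 p.2) +
      ∑ y, (Finset.univ.sup' Finset.univ_nonempty fun l => -lam * d l y + v l) * Phat y := by
  set M : X → ℝ := fun z => Finset.univ.sup' Finset.univ_nonempty fun l => -lam * d l z + v l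
    with hM
  have h1 : ∑ y, v y * Q y = ∑ y, ∑ z, v y * Γ (y, z) := by
    refine Finset.sum_congr rfl fun y _ => ?_
    rw [← hΓ.2.1 y, Finset.mul_sum]
  have h2 : lam * (∑ p : X × X, Γ p * d p.1 p.2) + ∑ z, M z * Phat z
      = ∑ y, ∑ z, (lam * d y z + M z) * Γ (y, z) := by
    rw [Finset.mul_sum, Fintype.sum_prod_type]
    have : ∑ z, M z * Phat z = ∑ z, ∑ y, M z * Γ (y, z) := by
      refine Finset.sum_congr rfl fun z _ => ?_
      rw [← hΓ.2.2 z, Finset.mul_sum]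
    rw [this, Finset.sum_comm (f := fun z y => M z * Γ (y, z)), ← Finset.sum_add_distrib]
    refine Finset.sum_congr rfl fun y _ => ?_
    rw [← Finset.sum_add_distrib]
    refine Finset.sum_congr rfl fun z _ => ?_
    ring
  rw [h1, h2]
  refine Finset.sum_le_sum fun y _ => Finset.sum_le_sum fun z _ => ?_
  refine mul_le_mul_of_nonneg_right ?_ (hΓ.1 _)
  have : -lam * d y z + v y ≤ M z :=
    Finset.le_sup' (f := fun l => -lam * d l z + v l) (Finset.mem_univ y)
  linarith

/-- Monotonicity of the robust value under ambiguity-set inclusion: the robust value over a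
Wasserstein ball around `Pbar` is bounded by the dual value at the larger ball around `Phat`. -/
theorem robust_value_mono_of_ball_subset
    {X : Type*} [Fintype X] [Nonempty X]
    (d : X → X → ℝ) (hd : IsMetricOn d)
    (v : X → ℝ) (Pbar Phat : X → ℝ) (hPbar : IsProbVec Pbar) (hPhat : IsProbVec Phat)
    (δ δ' : ℝ) (hδ : 0 ≤ δ) (hδ' : 0 ≤ δ')
    (hsub : {Q : X → ℝ | IsProbVec Q ∧ Wass d Q Pbar ≤ δ} ⊆
      {Q : X → ℝ | IsProbVec Q ∧ Wass d Q Phat ≤ δ'}) :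
    sSup {s | ∃ Q : X → ℝ, IsProbVec Q ∧ Wass d Q Pbar ≤ δ ∧ s = ∑ y, v y * Q y} ≤
      sInf {s | ∃ lam : ℝ, 0 ≤ lam ∧
        s = lam * δ' +
          ∑ y, (Finset.univ.sup' Finset.univ_nonempty fun l => -lam * d l y + v l) * Phat y} := by
  -- Pbar is feasible: Wass d Pbar Pbar ≤ δ
  classical
  have hWself : Wass d Pbar Pbar ≤ δ := by
    have h0mem : (0 : ℝ) ∈ {c | ∃ Γ : X × X → ℝ, IsCoupling Pbar Pbar Γ ∧
        c = ∑ p : X × X, Γ p * d p.1 p.2} := by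
      refine ⟨fun p => if p.1 = p.2 then Pbar p.1 else 0, ⟨?_, ?_, ?_⟩, ?_⟩
      · intro p; dsimp only; split
        · exact hPbar.1 _
        · exact le_refl 0
      · intro y; simp
      · intro z; simp [Finset.sum_ite_eq, eq_comm]
      · rw [Finset.sum_eq_zero]
        rintro ⟨y, z⟩ _
        dsimp only
        by_cases h : y = z
        · subst h; simp [(hd.2.1 y y).mpr rfl]
        · simp [h]
    have hbdd : BddBelow {c | ∃ Γ : X × X → ℝ, IsCoupling Pbar Pbar Γ ∧
        c = ∑ p : X × X, Γ p * d p.1 p.2} := by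
      refine ⟨0, fun c hc => ?_⟩
      obtain ⟨Γ, hΓ, rfl⟩ := hc
      exact Finset.sum_nonneg fun p _ => mul_nonneg (hΓ.1 p) (hd.1 _ _)
    exact le_trans (csInf_le hbdd h0mem) hδ
  have hSne : ∃ s, s ∈ {s | ∃ Q : X → ℝ, IsProbVec Q ∧ Wass d Q Pbar ≤ δ ∧
      s = ∑ y, v y * Q y} := ⟨_, Pbar, hPbar, hWself, rfl⟩
  refine csSup_le (Set.nonempty_def.mpr hSne) ?_
  rintro s ⟨Q, hQ, hW, rfl⟩
  refine le_csInf ⟨_, 0, le_refl 0, rfl⟩ ?_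
  rintro t ⟨lam, hlam, rfl⟩
  -- Q is in the Phat ball
  have hQ' : Wass d Q Phat ≤ δ' := (hsub ⟨hQ, hW⟩).2
  set C := {c | ∃ Γ : X × X → ℝ, IsCoupling Q Phat Γ ∧ c = ∑ p : X × X, Γ p * d p.1 p.2}
    with hC
  have hCne : C.Nonempty := ⟨_, fun p => Q p.1 * Phat p.2, prod_coupling Q Phat hQ hPhat, rfl⟩
  refine le_of_forall_pos_le_add fun ε hε => ?_
  obtain ⟨c, hcC, hclt⟩ := Real.lt_sInf_add_pos hCne (show (0:ℝ) < ε / (lam + 1) by positivity)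
  obtain ⟨Γ, hΓ, rfl⟩ := hcC
  have key := coupling_key d hd v Q Phat Γ hΓ lam hlam
  have hcost : ∑ p : X × X, Γ p * d p.1 p.2 ≤ δ' + ε / (lam + 1) := by
    have : Wass d Q Phat = sInf C := rfl
    linarith [hclt, hQ']
  have hlamcost : lam * (∑ p : X × X, Γ p * d p.1 p.2) ≤ lam * δ' + ε := by
    have h1 : lam * (∑ p : X × X, Γ p * d p.1 p.2) ≤ lam * (δ' + ε / (lam + 1)) :=
      mul_le_mul_of_nonneg_left hcost hlam
    have h2 : lam * (ε / (lam + 1)) ≤ ε := by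
      rw [mul_div_assoc'] ; rw [div_le_iff₀ (by linarith)]
      nlinarith
    nlinarith
  linarith
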